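/- For any real 0 < q < 1, the sum S = ∑_{i=1}^∞ log(1-q^i) satisfies q·log(q)/(6(1-q)) ≤ S - π²/(6·log q) + log(1-q)/2 ≤ -(1-q)/(q·log q). -/

import Mathlib

open Real Nat Filter Set Topology

lemma aux_tanh {y : ℝ} (hy : 0 ≤ y) : 2 * (Real.exp y - 1) ≤ y * (Real.exp y + 1) := by
  have h0 : HasSum (fun n : ℕ => y ^ n / n !) (Real.exp y) := by
    rw [Real.exp_eq_exp_ℝ]
    exact NormedSpace.expSeries_div_hasSum_exp y
  have h1' : HasSum (fun n : ℕ => ((n+1 : ℕ) : ℝ) * y ^ (n+1) / ((n+1)! : ℝ))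
      (y * Real.exp y) := by
    have := h0.mul_left y
    convert this using 2 with n
    · rfl
    rw [Nat.factorial_succ]
    push_cast
    have hn : ((n:ℝ)+1) ≠ 0 := by positivity
    field_simp
    ring
  have h1 : HasSum (fun n : ℕ => (n : ℝ) * y ^ n / n !) (y * Real.exp y) := by
    have := (hasSum_nat_add_iff (f := fun n : ℕ => (n : ℝ) * y ^ n / n !)
      (g := y * Real.exp y) 1).mp h1'
    simpa using this
  have h2 : HasSum (fun n : ℕ => 2 * (y ^ n / n !)) (2 * Real.exp y) := h0.mul_left 2
  have h3 : HasSum (fun n : ℕ => (n : ℝ) * y ^ n / (n ! : ℝ) - 2 * (y ^ n / n !))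
      (y * Real.exp y - 2 * Real.exp y) := h1.sub h2
  have h4 : HasSum (fun n : ℕ => ((n+3 : ℕ) : ℝ) * y ^ (n+3) / ((n+3)! : ℝ)
        - 2 * (y ^ (n+3) / ((n+3)! : ℝ)))
      ((y * Real.exp y - 2 * Real.exp y) -
        ∑ i ∈ Finset.range 3, ((i : ℝ) * y ^ i / (i ! : ℝ) - 2 * (y ^ i / i !))) :=
    (hasSum_nat_add_iff' (f := fun n : ℕ => (n : ℝ) * y ^ n / (n ! : ℝ) - 2 * (y ^ n / n !))
      (g := y * Real.exp y - 2 * Real.exp y) 3).mpr h3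
  have hnn := hasSum_le (fun n => ?_) hasSum_zero h4
  · have hsum : ∑ i ∈ Finset.range 3, ((i : ℝ) * y ^ i / (i ! : ℝ) - 2 * (y ^ i / i !)) = -2 - y := by
      simp [Finset.sum_range_succ]
      ring
    rw [hsum] at hnn
    linarith
  · show (0:ℝ) ≤ _
    have h5 : (0:ℝ) ≤ y ^ (n+3) := pow_nonneg hy _
    have h6 : (0:ℝ) < ((n+3)! : ℝ) := by positivity
    have heq : ((n+3 : ℕ) : ℝ) * y^(n+3)/((n+3)! : ℝ) - 2*(y^(n+3)/((n+3)! : ℝ))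
        = ((n:ℝ)+1) * (y^(n+3)/((n+3)! : ℝ)) := by
      push_cast
      ring
    rw [heq]
    positivity

lemma aux_quad {y : ℝ} (hy : 0 ≤ y) :
    0 ≤ 2 * Real.exp y ^ 2 - (2 + 3 * y) * Real.exp y + y := by
  have h := Real.sum_le_exp_of_nonneg hy 4
  have hs : ∑ i ∈ Finset.range 4, y ^ i / i ! = 1 + y + y^2/2 + y^3/6 := by
    simp [Finset.sum_range_succ]
    norm_num [Nat.factorial]
  rw [hs] at h
  nlinarith [sq_nonneg (Real.exp y - (1+y+y^2/2+y^3/6)), sq_nonneg y, sq_nonneg (y-1),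
    pow_nonneg hy 3, pow_nonneg hy 4, pow_nonneg hy 5, pow_nonneg hy 6, sq_nonneg (y*y-y)]

noncomputable def li2 (x : ℝ) : ℝ := ∑' n : ℕ, x ^ (n+1) / ((n:ℝ)+1)^2

lemma li2_summable {x : ℝ} (h0 : 0 ≤ x) (h1 : x < 1) :
    Summable (fun n : ℕ => x ^ (n+1) / ((n:ℝ)+1)^2) := by
  refine Summable.of_nonneg_of_le (fun n => by positivity) (fun n => ?_)
    (summable_geometric_of_lt_one h0 h1)
  calc x ^ (n+1) / ((n:ℝ)+1)^2 ≤ x ^ (n+1) :=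
        div_le_self (pow_nonneg h0 _) (by nlinarith [(Nat.cast_nonneg n : (0:ℝ) ≤ n)])
    _ ≤ x ^ n := pow_le_pow_of_le_one h0 h1.le (Nat.le_succ n)

lemma li2_hasDerivAt {x : ℝ} (h0 : 0 < x) (h1 : x < 1) :
    HasDerivAt li2 (-Real.log (1-x)/x) x := by
  have key : HasDerivAt li2 (∑' n : ℕ, x ^ n / ((n:ℝ)+1)) x := by
    set r : ℝ := (1+x)/2 with hr
    have hr0 : 0 < r := by positivity
    have hr1 : r < 1 := by unfold r; linarith
    have hxr : x < r := by unfold r; linarith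
    refine hasDerivAt_tsum_of_isPreconnected (u := fun n : ℕ => r ^ n)
      (t := Set.Ioo (-r) r) (g := fun (n : ℕ) (z : ℝ) => z ^ (n+1) / ((n:ℝ)+1)^2)
      (g' := fun (n : ℕ) (y : ℝ) => y ^ n / ((n:ℝ)+1)) (y₀ := 0)
      (summable_geometric_of_lt_one hr0.le hr1) isOpen_Ioo (convex_Ioo _ _).isPreconnected
      (fun n y _ => ?_) (fun n y hy => ?_) ⟨by linarith, hr0⟩ (by simpa using (summable_zero : Summable (fun _ : ℕ => (0:ℝ)))) ⟨by linarith, hxr⟩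
    · have h := (hasDerivAt_pow (n+1) y).div_const (((n:ℝ)+1)^2)
      convert h using 1
      · rfl
      have hn : ((n:ℝ)+1) ≠ 0 := by positivity
      push_cast
      field_simp
    · rw [Real.norm_eq_abs, abs_div, abs_of_pos (by positivity : (0:ℝ) < (n:ℝ)+1)]
      calc |y ^ n| / ((n:ℝ)+1) ≤ |y ^ n| :=
            div_le_self (abs_nonneg _) (by linarith [(Nat.cast_nonneg n : (0:ℝ) ≤ n)])
        _ = |y| ^ n := abs_pow y n
        _ ≤ r ^ n := pow_le_pow_left₀ (abs_nonneg _) (abs_lt.mpr ⟨hy.1, hy.2⟩).le n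
  have hid : ∑' n : ℕ, x ^ n / ((n:ℝ)+1) = -Real.log (1-x)/x := by
    have habs : |x| < 1 := abs_lt.mpr ⟨by linarith, h1⟩
    have h := (hasSum_pow_div_log_of_abs_lt_one habs).mul_left x⁻¹
    have heq : (fun n : ℕ => x⁻¹ * (x ^ (n+1) / ((n:ℝ)+1))) = fun n : ℕ => x ^ n / ((n:ℝ)+1) := by
      funext n
      have hn : ((n:ℝ)+1) ≠ 0 := by positivity
      field_simp [pow_succ]
      ring
    rw [heq] at h
    rw [h.tsum_eq]
    ring
  rwa [hid] at key


noncomputable def Gfun (x : ℝ) : ℝ := (1-x)/x + Real.log x * Real.log (1-x) + li2 x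



lemma G_hasDerivAt {x : ℝ} (h0 : 0 < x) (h1 : x < 1) :
    HasDerivAt Gfun (-(1/x^2) - Real.log x/(1-x)) x := by
  have hx : x ≠ 0 := ne_of_gt h0
  have h1x : (1:ℝ) - x ≠ 0 := by linarith
  have hA : HasDerivAt (fun z : ℝ => (1-z)/z) (-(1/x^2)) x := by
    have h := ((hasDerivAt_const x (1:ℝ)).sub (hasDerivAt_id x)).div (hasDerivAt_id x) hx
    convert h using 1
    · rfl
    · rfl
    · rfl
    simp only [id, Pi.sub_apply]
    field_simp
    ring
  have hB2 : HasDerivAt (fun z : ℝ => Real.log (1-z)) (-(1-x)⁻¹) x := by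
    have h := (Real.hasDerivAt_log h1x).comp x ((hasDerivAt_const x (1:ℝ)).sub (hasDerivAt_id x))
    convert h using 1
    · rfl
    · rfl
    · rfl
    simp
  have hB : HasDerivAt (fun z : ℝ => Real.log z * Real.log (1-z))
      (x⁻¹ * Real.log (1-x) + Real.log x * -(1-x)⁻¹) x :=
    (Real.hasDerivAt_log hx).mul hB2
  have hC := li2_hasDerivAt h0 h1
  have h := (hA.add hB).add hC
  convert h using 1
  · rfl
  · rfl
  · rfl
  field_simp
  ring

lemma G_anti : AntitoneOn Gfun (Ioo (0:ℝ) 1) := by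
  have hderiv : ∀ x ∈ interior (Ioo (0:ℝ) 1), deriv Gfun x ≤ 0 := by
    rw [interior_Ioo]
    intro x hx
    rw [(G_hasDerivAt hx.1 hx.2).deriv]
    have h0 := hx.1
    have h1 := hx.2
    have h1x : (0:ℝ) < 1 - x := by linarith
    have hlog : -Real.log x ≤ (1-x)/x := by
      have h := Real.log_le_sub_one_of_pos (inv_pos.mpr h0)
      rw [Real.log_inv] at h
      have h2 : (1-x)/x = x⁻¹ - 1 := by field_simp
      rw [h2]
      linarith
    have key : -Real.log x / (1-x) ≤ 1/x^2 := by
      rw [div_le_iff₀ h1x]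
      calc -Real.log x ≤ (1-x)/x := hlog
        _ ≤ (1-x)/x^2 := by
            gcongr
            · nlinarith
        _ = 1/x^2 * (1-x) := by ring
    have : -(Real.log x / (1-x)) ≤ 1/x^2 := by rwa [neg_div] at key
    linarith
  refine antitoneOn_of_deriv_nonpos (convex_Ioo 0 1)
    (fun x hx => ((G_hasDerivAt hx.1 hx.2).differentiableAt.continuousAt).continuousWithinAt)
    (fun x hx => ?_) hderiv
  rw [interior_Ioo] at hx
  exact ((G_hasDerivAt hx.1 hx.2).differentiableAt).differentiableWithinAt

lemma basel_shift : HasSum (fun n : ℕ => 1/((n:ℝ)+1)^2) (π^2/6) := by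
  have h : HasSum (fun n : ℕ => 1/(n:ℝ)^2) (π^2/6 + ∑ i ∈ Finset.range 1, 1/(i:ℝ)^2) := by
    have : (π^2/6 : ℝ) + ∑ i ∈ Finset.range 1, 1/(i:ℝ)^2 = π^2/6 := by
      simp
    rw [this]
    exact hasSum_zeta_two
  have h2 := (hasSum_nat_add_iff (f := fun n : ℕ => 1/(n:ℝ)^2) (g := π^2/6) 1).mpr h
  convert h2 using 2 with n
  · rfl
  push_cast
  ring

lemma li2_le {x : ℝ} (h0 : 0 ≤ x) (h1 : x < 1) : li2 x ≤ π^2/6 := by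
  rw [← basel_shift.tsum_eq]
  refine Summable.tsum_le_tsum (fun n => ?_) (li2_summable h0 h1) basel_shift.summable
  have hp : x ^ (n+1) ≤ 1 := pow_le_one₀ h0 h1.le
  have hd : (0:ℝ) < ((n:ℝ)+1)^2 := by positivity
  gcongr

lemma li2_tendsto : Tendsto li2 (𝓝[<] (1:ℝ)) (𝓝 (π^2/6)) := by
  have hIoo : Ioo (0:ℝ) 1 ∈ 𝓝[<] (1:ℝ) :=
    Ioo_mem_nhdsLT_of_mem (by constructor <;> norm_num)
  rw [tendsto_order]
  constructor
  · intro a ha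
    have hps := basel_shift.tendsto_sum_nat
    obtain ⟨N, hN⟩ := (hps.eventually (eventually_gt_nhds ha)).exists
    have hF : Tendsto (fun x : ℝ => ∑ n ∈ Finset.range N, x ^ (n+1) / ((n:ℝ)+1)^2)
        (𝓝[<] (1:ℝ)) (𝓝 (∑ n ∈ Finset.range N, (1:ℝ) ^ (n+1) / ((n:ℝ)+1)^2)) := by
      refine Tendsto.mono_left ?_ nhdsWithin_le_nhds
      exact (Continuous.tendsto (by continuity) 1)
    have h1F : (∑ n ∈ Finset.range N, (1:ℝ) ^ (n+1) / ((n:ℝ)+1)^2) = ∑ n ∈ Finset.range N, 1 / ((n:ℝ)+1)^2 := by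
      simp
    rw [h1F] at hF
    filter_upwards [hIoo, hF.eventually (eventually_gt_nhds hN)] with x hx hFx
    calc a < ∑ n ∈ Finset.range N, x ^ (n+1) / ((n:ℝ)+1)^2 := hFx
      _ ≤ li2 x := Summable.sum_le_tsum _ (fun n _ => div_nonneg (pow_nonneg hx.1.le _) (by positivity))
          (li2_summable hx.1.le hx.2)
  · intro a ha
    filter_upwards [hIoo] with x hx
    exact lt_of_le_of_lt (li2_le hx.1.le hx.2) ha

lemma G_tendsto : Tendsto Gfun (𝓝[<] (1:ℝ)) (𝓝 (π^2/6)) := by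
  have hIoo : Ioo (0:ℝ) 1 ∈ 𝓝[<] (1:ℝ) :=
    Ioo_mem_nhdsLT_of_mem (by constructor <;> norm_num)
  have tA : Tendsto (fun x : ℝ => (1-x)/x) (𝓝[<] (1:ℝ)) (𝓝 0) := by
    have hc : ContinuousAt (fun x : ℝ => (1-x)/x) 1 :=
      ContinuousAt.div (by fun_prop) (by fun_prop) one_ne_zero
    have h2 := hc.tendsto.mono_left (nhdsWithin_le_nhds : 𝓝[<] (1:ℝ) ≤ 𝓝 1)
    have h0 : ((1:ℝ)-1)/1 = 0 := by norm_num
    rwa [h0] at h2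
  have tB : Tendsto (fun x : ℝ => Real.log x * Real.log (1-x)) (𝓝[<] (1:ℝ)) (𝓝 0) := by
    have tup : Tendsto (fun x : ℝ => 2 * Real.sqrt (1-x) / x) (𝓝[<] (1:ℝ)) (𝓝 0) := by
      have hc : ContinuousAt (fun x : ℝ => 2 * Real.sqrt (1-x) / x) 1 := by
        refine ContinuousAt.div ?_ (by fun_prop) one_ne_zero
        exact (continuous_const.mul (Real.continuous_sqrt.comp (continuous_const.sub continuous_id))).continuousAt
      have h2 := hc.tendsto.mono_left (nhdsWithin_le_nhds : 𝓝[<] (1:ℝ) ≤ 𝓝 1)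
      have h0 : 2 * Real.sqrt (1-1) / 1 = 0 := by norm_num
      rwa [h0] at h2
    refine tendsto_of_tendsto_of_tendsto_of_le_of_le' tendsto_const_nhds tup ?_ ?_
    · filter_upwards [hIoo] with x hx
      have ha := Real.log_nonpos hx.1.le hx.2.le
      have hb := Real.log_nonpos (x := 1-x) (by linarith [hx.2]) (by linarith [hx.1])
      nlinarith [mul_nonneg (neg_nonneg.2 ha) (neg_nonneg.2 hb)]
    · filter_upwards [hIoo] with x hx
      have h0 := hx.1
      have h1 := hx.2
      have h1x : (0:ℝ) < 1 - x := by linarith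
      set s := Real.sqrt (1-x) with hs
      have hs0 : 0 < s := Real.sqrt_pos.mpr h1x
      have hs2 : s^2 = 1 - x := Real.sq_sqrt h1x.le
      have e1 : -Real.log x ≤ (1-x)/x := by
        have h := Real.log_le_sub_one_of_pos (inv_pos.mpr h0)
        rw [Real.log_inv] at h
        have h2 : (1-x)/x = x⁻¹ - 1 := by field_simp
        rw [h2]; linarith
      have e2 : -Real.log (1-x) ≤ 2/s := by
        have hls : Real.log (1-x) = 2 * Real.log s := by
          rw [← hs2, Real.log_pow]
          push_cast
          ring
        have h := Real.log_le_sub_one_of_pos (inv_pos.mpr hs0)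
        rw [Real.log_inv] at h
        have hsi : (0:ℝ) < s⁻¹ := by positivity
        rw [hls, div_eq_mul_inv]
        linarith
      have e3 : Real.log x * Real.log (1-x) = (-Real.log x) * (-Real.log (1-x)) := by ring
      rw [e3]
      calc (-Real.log x) * (-Real.log (1-x)) ≤ ((1-x)/x) * (2/s) := by
            apply mul_le_mul e1 e2 ?_ ?_
            · have := Real.log_nonpos (by linarith : (0:ℝ) ≤ 1-x) (by linarith : (1:ℝ)-x ≤ 1)
              linarith
            · positivity
        _ = 2 * s / x := by
            rw [← hs2]
            field_simp
  have tC := li2_tendsto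
  have h := (tA.add tB).add tC
  have he : ((0:ℝ)+0)+π^2/6 = π^2/6 := by norm_num
  rw [he] at h
  exact h

lemma aux_key {q : ℝ} (hq0 : 0 < q) (hq1 : q < 1) :
    π^2/6 ≤ (1-q)/q + Real.log q * Real.log (1-q) + li2 q := by
  have hev : ∀ᶠ b in 𝓝[<] (1:ℝ), Gfun b ≤ Gfun q := by
    filter_upwards [Ioo_mem_nhdsLT_of_mem (⟨hq1, le_refl 1⟩ : (1:ℝ) ∈ Ioc q 1)] with b hb
    exact G_anti ⟨hq0, hq1⟩ ⟨hq0.trans hb.1, hb.2⟩ hb.1.le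
  exact le_of_tendsto G_tendsto hev




lemma termwise_low {L P k : ℝ} (hL : 0 < L) (hk : 1 ≤ k) (hP0 : 0 < P) (hP1 : P < 1)
    (htP : Real.exp (k*L) * P = 1) :
    0 ≤ 1/(k^2*L) - P/((1-P)*k) - P/(2*k) := by
  have hk0 : (0:ℝ) < k := by linarith
  have hy0 : 0 < k*L := mul_pos hk0 hL
  have hP1' : (0:ℝ) < 1 - P := by linarith
  have hquad := aux_quad hy0.le
  have e2 := mul_nonneg hquad (sq_nonneg P)
  have e1 : (2*Real.exp (k*L)^2 - (2+3*(k*L))*Real.exp (k*L) + (k*L)) * P^2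
      = 2*(Real.exp (k*L)*P)^2 - (2+3*(k*L))*(Real.exp (k*L)*P)*P + (k*L)*P^2 := by ring
  rw [e1, htP] at e2
  have h2 : 0 ≤ 2 - (2+3*(k*L))*P + (k*L)*P^2 := by linarith [e2]
  have hgoal : 1/(k^2*L) - P/((1-P)*k) - P/(2*k)
      = (2 - (2+3*(k*L))*P + (k*L)*P^2) / (2*k^2*L*(1-P)) := by
    field_simp
    ring
  rw [hgoal]
  exact div_nonneg h2 (by positivity)

lemma termwise_up {L P k : ℝ} (hL : 0 < L) (hk : 1 ≤ k) (hP0 : 0 < P) (hP1 : P < 1)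
    (htP : Real.exp (k*L) * P = 1) :
    1/(k^2*L) - P/((1-P)*k) - P/(2*k) ≤ (1-P)/(k^2*L) - P/k := by
  have hk0 : (0:ℝ) < k := by linarith
  have hy0 : 0 < k*L := mul_pos hk0 hL
  have hP1' : (0:ℝ) < 1 - P := by linarith
  have htanh := aux_tanh hy0.le
  have e := mul_le_mul_of_nonneg_right htanh hP0.le
  have e1 : 2*(Real.exp (k*L) - 1)*P = 2*(Real.exp (k*L)*P) - 2*P := by ring
  have e2 : (k*L)*(Real.exp (k*L)+1)*P = (k*L)*(Real.exp (k*L)*P) + (k*L)*P := by ring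
  rw [e1, e2, htP] at e
  have h1 : 2*(1-P) ≤ (k*L)*(1+P) := by linarith
  have hgoal : ((1-P)/(k^2*L) - P/k) - (1/(k^2*L) - P/((1-P)*k) - P/(2*k))
      = ((k*L)*(1+P) - 2*(1-P)) * P / (2*k^2*L*(1-P)) := by
    field_simp
    ring
  have h2 : 0 ≤ ((1-P)/(k^2*L) - P/k) - (1/(k^2*L) - P/((1-P)*k) - P/(2*k)) := by
    rw [hgoal]
    exact div_nonneg (mul_nonneg (by linarith) hP0.le) (by positivity)
  linarith

/-- Euler–Maclaurin estimate for `∑_{i≥1} log(1 - qⁱ)`. -/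
theorem sum_log_one_sub_pow_bounds (q : ℝ) (hq0 : 0 < q) (hq1 : q < 1) :
    q * Real.log q / (6 * (1 - q)) ≤
      (∑' i : ℕ, Real.log (1 - q ^ (i + 1))) - π ^ 2 / (6 * Real.log q)
        + Real.log (1 - q) / 2 ∧
    (∑' i : ℕ, Real.log (1 - q ^ (i + 1))) - π ^ 2 / (6 * Real.log q)
        + Real.log (1 - q) / 2 ≤ -((1 - q) / (q * Real.log q)) := by
  have hq1sub : (0:ℝ) < 1 - q := by linarith
  set L : ℝ := -Real.log q with hLdef
  have hlogq : Real.log q = -L := by rw [hLdef]; ring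
  have hL : 0 < L := by
    have := Real.log_neg hq0 hq1
    rw [hLdef]; linarith
  have hpow1 : ∀ k : ℕ, q ^ (k+1) < 1 := fun k => pow_lt_one₀ hq0.le hq1 k.succ_ne_zero
  have hpowpos : ∀ k : ℕ, 0 < q ^ (k+1) := fun k => pow_pos hq0 _
  have hpowsub : ∀ k : ℕ, 0 < 1 - q ^ (k+1) := fun k => by linarith [hpow1 k]
  -- the double series
  set F : ℕ → ℕ → ℝ := fun i n => q ^ ((i+1)*(n+1)) / ((n:ℝ)+1) with hFdef
  have hlog_i : ∀ i : ℕ, HasSum (fun n => F i n) (-Real.log (1 - q^(i+1))) := by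
    intro i
    have habs : |q ^ (i+1)| < 1 := by
      rw [abs_of_pos (hpowpos i)]; exact hpow1 i
    have h := hasSum_pow_div_log_of_abs_lt_one habs
    convert h using 2 with n
    rw [← pow_mul]
  have hinner : ∀ n : ℕ, HasSum (fun i => F i n)
      (q^(n+1) / ((1 - q^(n+1)) * ((n:ℝ)+1))) := by
    intro n
    have h := (hasSum_geometric_of_lt_one (pow_nonneg hq0.le (n+1)) (hpow1 n)).mul_left
      (q^(n+1) / ((n:ℝ)+1))
    have hne1 : ((n:ℝ)+1) ≠ 0 := by positivity
    have hne2 : (1:ℝ) - q^(n+1) ≠ 0 := (hpowsub n).ne'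
    have hfe : (fun i : ℕ => q^(n+1)/((n:ℝ)+1) * (q^(n+1))^i) = fun i => F i n := by
      funext i
      show _ = q ^ ((i+1)*(n+1)) / ((n:ℝ)+1)
      rw [div_mul_eq_mul_div, ← _root_.pow_succ', ← pow_mul]
      congr 2
      ring
    have hve : q^(n+1)/((n:ℝ)+1) * (1-q^(n+1))⁻¹ = q^(n+1)/((1-q^(n+1))*((n:ℝ)+1)) := by
      field_simp
    rw [hfe, hve] at h
    exact h
  have hFsummable : Summable (Function.uncurry F) := by
    refine Summable.of_nonneg_of_le
      (fun p => div_nonneg (pow_nonneg hq0.le _) (by positivity)) (fun p => ?_)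
      (((summable_geometric_of_lt_one hq0.le hq1).mul_of_nonneg
        (summable_geometric_of_lt_one hq0.le hq1) (fun i => pow_nonneg hq0.le i)
        (fun n => pow_nonneg hq0.le n)).mul_left q)
    obtain ⟨i, n⟩ := p
    show q ^ ((i+1)*(n+1)) / ((n:ℝ)+1) ≤ q * (q ^ i * q ^ n)
    calc q ^ ((i+1)*(n+1)) / ((n:ℝ)+1) ≤ q ^ ((i+1)*(n+1)) :=
          div_le_self (pow_nonneg hq0.le _) (by linarith [(Nat.cast_nonneg n : (0:ℝ) ≤ n)])
      _ ≤ q ^ (i+n+1) := pow_le_pow_of_le_one hq0.le hq1.le (by nlinarith)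
      _ = q * (q ^ i * q ^ n) := by
          rw [show i+n+1 = 1+(i+n) by ring, pow_add, pow_add, pow_one]
  -- the series for S
  have hS : (∑' i : ℕ, Real.log (1 - q ^ (i + 1)))
      = -∑' n : ℕ, q^(n+1) / ((1 - q^(n+1)) * ((n:ℝ)+1)) := by
    have h1 : (∑' i : ℕ, Real.log (1 - q ^ (i + 1))) = ∑' i : ℕ, -(∑' n, F i n) := by
      congr 1
      funext i
      rw [(hlog_i i).tsum_eq]
      ring
    rw [h1, tsum_neg, neg_inj]
    rw [← Summable.tsum_comm' hFsummable (fun i => (hlog_i i).summable) (fun n => (hinner n).summable)]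
    congr 1
    funext n
    exact (hinner n).tsum_eq
  -- series building blocks
  have hA : HasSum (fun n : ℕ => 1/(((n:ℝ)+1)^2 * L)) (π^2/(6*L)) := by
    have h := basel_shift.div_const L
    have hfe : (fun n : ℕ => 1/((n:ℝ)+1)^2 / L) = fun n : ℕ => 1/(((n:ℝ)+1)^2*L) := by
      funext n
      exact div_div _ _ _
    rw [hfe, div_div] at h
    exact h
  have hC : HasSum (fun n : ℕ => q^(n+1)/(2*((n:ℝ)+1))) (-Real.log (1-q)/2) := by
    have habs : |q| < 1 := by rw [abs_of_pos hq0]; exact hq1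
    have h := (hasSum_pow_div_log_of_abs_lt_one habs).div_const 2
    have hfe : (fun n : ℕ => q^(n+1)/((n:ℝ)+1) / 2) = fun n : ℕ => q^(n+1)/(2*((n:ℝ)+1)) := by
      funext n
      rw [div_div, mul_comm]
    rw [hfe] at h
    exact h
  have hT1sum : Summable (fun n : ℕ => q^(n+1) / ((1 - q^(n+1)) * ((n:ℝ)+1))) := by
    refine Summable.of_nonneg_of_le
      (fun n => le_of_lt (div_pos (hpowpos n) (mul_pos (hpowsub n) (by positivity))))
      (fun n => ?_)
      (((summable_geometric_of_lt_one hq0.le hq1)).mul_left (q/(1-q)))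
    have hn1 : (1:ℝ) ≤ (n:ℝ)+1 := by linarith [(Nat.cast_nonneg n : (0:ℝ) ≤ n)]
    have hd : 1 - q ≤ (1 - q^(n+1)) * ((n:ℝ)+1) := by
      have h1 : 1 - q ≤ 1 - q^(n+1) := by
        have : q^(n+1) ≤ q := by
          calc q^(n+1) ≤ q^1 := pow_le_pow_of_le_one hq0.le hq1.le (by omega)
            _ = q := pow_one q
        linarith
      nlinarith [hpowsub n]
    calc q^(n+1) / ((1 - q^(n+1)) * ((n:ℝ)+1)) ≤ q^(n+1) / (1-q) := by
          gcongr
      _ = q/(1-q) * q^n := by rw [_root_.pow_succ']; ring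
  have hT1 := hT1sum.hasSum
  -- the expression equals tsum of u
  set u : ℕ → ℝ := fun n => 1/(((n:ℝ)+1)^2 * L) - q^(n+1) / ((1 - q^(n+1)) * ((n:ℝ)+1))
      - q^(n+1)/(2*((n:ℝ)+1)) with hudef
  have hU : HasSum u (π^2/(6*L) - (∑' n : ℕ, q^(n+1) / ((1 - q^(n+1)) * ((n:ℝ)+1)))
      - -Real.log (1-q)/2) := (hA.sub hT1).sub hC
  have hEexpr : (∑' i : ℕ, Real.log (1 - q ^ (i + 1))) - π ^ 2 / (6 * Real.log q)
        + Real.log (1 - q) / 2 = ∑' n, u n := by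
    rw [hU.tsum_eq, hS, hlogq]
    field_simp
    ring
  -- exponential identity
  have hexp : ∀ n : ℕ, Real.exp ((((n:ℕ):ℝ)+1)*L) * q^(n+1) = 1 := by
    intro n
    have hq : q = Real.exp (-L) := by rw [hLdef, neg_neg, Real.exp_log hq0]
    conv_lhs => rw [hq]
    rw [← Real.exp_nat_mul, ← Real.exp_add]
    rw [show (((n:ℕ):ℝ)+1)*L + ((n:ℕ)+1 : ℕ)*(-L) = 0 by push_cast; ring]
    exact Real.exp_zero
  have hk1 : ∀ n : ℕ, (1:ℝ) ≤ ((n:ℕ):ℝ)+1 := fun n => by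
    linarith [(Nat.cast_nonneg n : (0:ℝ) ≤ n)]
  have hlow : ∀ n, 0 ≤ u n := fun n =>
    termwise_low hL (hk1 n) (hpowpos n) (hpow1 n) (hexp n)
  constructor
  · -- lower bound
    rw [hEexpr]
    have hneg : q * Real.log q / (6 * (1 - q)) ≤ 0 := by
      apply div_nonpos_of_nonpos_of_nonneg
      · nlinarith [Real.log_nonpos hq0.le hq1.le]
      · linarith
    exact le_trans hneg (tsum_nonneg hlow)
  · -- upper bound
    rw [hEexpr]
    have habs : |q| < 1 := by rw [abs_of_pos hq0]; exact hq1
    have hlog1 : HasSum (fun n : ℕ => q^(n+1)/((n:ℝ)+1)) (-Real.log (1-q)) :=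
      hasSum_pow_div_log_of_abs_lt_one habs
    have hli2 : HasSum (fun n : ℕ => q^(n+1)/((n:ℝ)+1)^2) (li2 q) :=
      (li2_summable hq0.le hq1).hasSum
    have hv0 := (hA.sub (hli2.div_const L)).sub hlog1
    have hvfe : (fun n : ℕ => 1/(((n:ℝ)+1)^2*L) - (q^(n+1)/((n:ℝ)+1)^2)/L - q^(n+1)/((n:ℝ)+1))
        = fun n : ℕ => (1-q^(n+1))/(((n:ℝ)+1)^2*L) - q^(n+1)/((n:ℝ)+1) := by
      funext n
      have hn : ((n:ℝ)+1) ≠ 0 := by positivity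
      field_simp
    rw [hvfe] at hv0
    have hup : ∀ n, u n ≤ (1-q^(n+1))/(((n:ℝ)+1)^2*L) - q^(n+1)/((n:ℝ)+1) := fun n =>
      termwise_up hL (hk1 n) (hpowpos n) (hpow1 n) (hexp n)
    have hle : ∑' n, u n ≤ π^2/(6*L) - li2 q/L - -Real.log (1-q) :=
      hv0.tsum_eq ▸ Summable.tsum_le_tsum hup hU.summable hv0.summable
    have hkey := aux_key hq0 hq1
    rw [hlogq] at hkey
    have hfin : π^2/(6*L) - li2 q/L - -Real.log (1-q) ≤ (1-q)/(q*L) := by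
      have hmid : π^2/(6*L) - li2 q/L - -Real.log (1-q)
          = (π^2/6 - li2 q + L*Real.log (1-q))/L := by
        field_simp
        ring
      have hnum : π^2/6 - li2 q + L*Real.log (1-q) ≤ (1-q)/q := by nlinarith [hkey]
      rw [hmid, show (1-q)/(q*L) = ((1-q)/q)/L by rw [div_div]]
      gcongr
    have hrhs : -((1 - q) / (q * Real.log q)) = (1-q)/(q*L) := by
      rw [hlogq, mul_neg, div_neg, neg_neg]
    rw [hrhs]
    exact le_trans hle hfin
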